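/- Let X ⊆ ℝ² be a compact set with empty interior (equivalently, a compact planar set of topological dimension at most 1), and let p ∈ X. Then the set Z = {r ∈ (0,∞) : S_r(p) ∩ X is totally disconnected} is a dense Gδ subset of (0,∞). -/

import Mathlib

open Set Filter Topology Metric

noncomputable section

/-- An arc in a topological space: a subset homeomorphic to the closed unit
interval `[0,1]`. -/
def IsArc {X : Type*} [TopologicalSpace X] (A : Set X) : Prop :=
  Nonempty (Set.Icc (0 : ℝ) 1 ≃ₜ A)

/-- `x` is an endpoint of the arc `A`: it is the image of `0` or `1` under some
homeomorphism from `[0,1]` onto `A`. -/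
def IsArcEndpoint {X : Type*} [TopologicalSpace X] (A : Set X) (x : X) : Prop :=
  ∃ e : Set.Icc (0 : ℝ) 1 ≃ₜ A,
    (e ⟨0, by norm_num⟩ : X) = x ∨ (e ⟨1, by norm_num⟩ : X) = x

/-- A point `x` on the frontier of an open set `U` is a piercing point of `U` if
for every open `V ∋ x` and every arc `α` in the space containing `x` with `x` not
an endpoint of `α`, the set `α ∩ V` meets both `U` and the complement of the
closure of `U`. -/
def IsPiercingPoint {X : Type*} [TopologicalSpace X] (U : Set X) (x : X) : Prop :=
  x ∈ frontier U ∧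
    ∀ V : Set X, IsOpen V → x ∈ V →
      ∀ α : Set X, IsArc α → x ∈ α → ¬ IsArcEndpoint α x →
        (α ∩ V ∩ U).Nonempty ∧ (α ∩ V ∩ (closure U)ᶜ).Nonempty

/-- An open set is pierced if every point of its frontier is a piercing point. -/
def IsPierced {X : Type*} [TopologicalSpace X] (U : Set X) : Prop :=
  IsOpen U ∧ ∀ x ∈ frontier U, IsPiercingPoint U x

/-- A space has the Jure property if its topology has a basis of pierced open sets. -/
def HasJureProperty (X : Type*) [TopologicalSpace X] : Prop :=
  ∃ B : Set (Set X), TopologicalSpace.IsTopologicalBasis B ∧ ∀ U ∈ B, IsPierced U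

/-- A fence: a compact metric space each of whose connected components is an arc
or a single point. -/
def IsFenceSpace (X : Type*) [MetricSpace X] : Prop :=
  CompactSpace X ∧
    ∀ x : X, IsArc (connectedComponent x) ∨ connectedComponent x = {x}

/-- `X` is a fan with vertex `v`: a continuum which is the union of a collection
of arcs any two of which meet exactly at `v`, and in which the intersection of
any two subcontinua is connected. -/
def IsFanWithVertex (X : Type*) [MetricSpace X] (v : X) : Prop :=
  Nonempty X ∧ CompactSpace X ∧ ConnectedSpace X ∧
    (∃ 𝓛 : Set (Set X), (∀ L ∈ 𝓛, IsArc L) ∧ ⋃₀ 𝓛 = Set.univ ∧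
      ∀ L ∈ 𝓛, ∀ L' ∈ 𝓛, L ≠ L' → L ∩ L' = {v}) ∧
    ∀ H K : Set X, H.Nonempty → IsCompact H → IsPreconnected H →
      K.Nonempty → IsCompact K → IsPreconnected K → IsPreconnected (H ∩ K)

/-- The Euclidean plane. -/
abbrev Plane : Type := EuclideanSpace ℝ (Fin 2)

/-- The closed annulus `A_{rq}(p)` between the circles of radii `r` and `q`
centered at `p`. -/
def closedAnnulus (p : Plane) (r q : ℝ) : Set Plane :=
  {x | min r q ≤ dist x p ∧ dist x p ≤ max r q}

/-- A fence inside the plane: a compact set each of whose connected components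
is an arc or a single point. -/
def IsFenceSet (X : Set Plane) : Prop :=
  IsCompact X ∧ ∀ x ∈ X,
    IsArc (connectedComponentIn X x) ∨ connectedComponentIn X x = {x}

/-- `β` is a bend at `S_r(p)` terminating at `S_q(p)`: an arc `β ⊆ X` contained
in the closed annulus `A_{rq}(p)`, meeting `S_r(p)`, and meeting `S_q(p)`
exactly in its two endpoints. -/
def IsBendTerminating (X : Set Plane) (p : Plane) (r q : ℝ) (β : Set Plane) : Prop :=
  IsArc β ∧ β ⊆ X ∧ β ⊆ closedAnnulus p r q ∧
    (β ∩ Metric.sphere p r).Nonempty ∧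
    β ∩ Metric.sphere p q = {x | IsArcEndpoint β x}

/-- `β` is a bend at `S_r(p)`: a bend terminating at `S_q(p)` for some `q > 0`. -/
def IsBendAt (X : Set Plane) (p : Plane) (r : ℝ) (β : Set Plane) : Prop :=
  ∃ q > 0, IsBendTerminating X p r q β

/-- The bend `β` (terminating at `S_q(p)`) separates `ϑ` from `∞`: there is an
arc `α ⊆ D_q(p)` meeting `S_q(p)` exactly at the endpoints of `β` such that `ϑ`
lies in a bounded connected component of the complement of `α ∪ β`. -/
def SeparatesFromInfinity (p : Plane) (q : ℝ) (β : Set Plane) (ϑ : Plane) : Prop :=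
  ∃ α : Set Plane, IsArc α ∧ α ⊆ Metric.closedBall p q ∧
    α ∩ Metric.sphere p q = {x | IsArcEndpoint β x} ∧
    ϑ ∉ α ∪ β ∧ Bornology.IsBounded (connectedComponentIn ((α ∪ β)ᶜ) ϑ)

/-- `𝔅_{qrϑ}`: the set of all bends at `S_r(p)` terminating at `S_q(p)` that
separate `ϑ` from `∞`. -/
def Bends (X : Set Plane) (p : Plane) (q r : ℝ) (ϑ : Plane) : Set (Set Plane) :=
  {β | IsBendTerminating X p r q β ∧ SeparatesFromInfinity p q β ϑ}

/-- Topological limit superior of a sequence of sets: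
`⋂_N closure (⋃_{n ≥ N} A n)`. -/
def setLimsup {X : Type*} [TopologicalSpace X] (A : ℕ → Set X) : Set X :=
  ⋂ N : ℕ, closure (⋃ n, ⋃ _ : N ≤ n, A n)

/-- The point `p + q • (cos θ, sin θ)` of the circle `S_q(p)`. -/
def circlePoint (p : Plane) (q θ : ℝ) : Plane :=
  p + (q * Real.cos θ) • EuclideanSpace.single (0 : Fin 2) (1 : ℝ)
    + (q * Real.sin θ) • EuclideanSpace.single (1 : Fin 2) (1 : ℝ)

/-- For a compact planar set `X` with empty interior (i.e. of
dimension at most 1) and `p ∈ X`, the set of radii `r > 0` for which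
`S_r(p) ∩ X` is totally disconnected is a dense `Gδ` subset of `(0,∞)`. -/
def cw (p w : Plane) : ℂ := (w 0 - p 0 : ℝ) + (w 1 - p 1 : ℝ) * Complex.I

lemma cw_continuous (p : Plane) : Continuous (cw p) := by
  unfold cw
  fun_prop

lemma abs_cw (p w : Plane) : ‖cw p w‖ = dist w p := by
  rw [cw, Complex.norm_add_mul_I, EuclideanSpace.dist_eq]
  simp [Fin.sum_univ_two, Real.dist_eq, sq_abs]

lemma cw_circlePoint (p : Plane) (q θ : ℝ) :
    cw p (circlePoint p q θ) = q * Complex.exp (θ * Complex.I) := by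
  have h0 : (circlePoint p q θ) 0 = p 0 + q * Real.cos θ := by
    simp [circlePoint, EuclideanSpace.single_apply]
  have h1 : (circlePoint p q θ) 1 = p 1 + q * Real.sin θ := by
    simp [circlePoint, EuclideanSpace.single_apply]
  rw [cw, h0, h1, Complex.exp_mul_I]
  push_cast
  ring

lemma cw_inj {p : Plane} {w₁ w₂ : Plane} (h : cw p w₁ = cw p w₂) : w₁ = w₂ := by
  rw [Complex.ext_iff] at h
  simp only [cw, Complex.add_re, Complex.ofReal_re, Complex.mul_re, Complex.I_re,
    Complex.ofReal_im, Complex.I_im, Complex.add_im, Complex.mul_im] at h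
  ext i
  fin_cases i <;> [skip; skip] <;> simp <;> linarith [h.1, h.2]

lemma dist_circlePoint (p : Plane) (q θ : ℝ) : dist (circlePoint p q θ) p = |q| := by
  rw [← abs_cw, cw_circlePoint, norm_mul, Complex.norm_exp]
  simp

lemma circlePoint_surj {p : Plane} {r : ℝ} (hr : 0 < r) {w : Plane}
    (hw : w ∈ Metric.sphere p r) : ∃ θ : ℝ, circlePoint p r θ = w := by
  refine ⟨Complex.arg (cw p w), cw_inj (p := p) ?_⟩
  rw [cw_circlePoint]
  have : ‖cw p w‖ = r := by rw [abs_cw]; exact hw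
  calc (r : ℂ) * Complex.exp ((cw p w).arg * Complex.I)
      = (‖cw p w‖ : ℂ) * Complex.exp ((cw p w).arg * Complex.I) := by rw [this]
    _ = cw p w := Complex.norm_mul_exp_arg_mul_I _

lemma circlePoint_inj {p : Plane} {r : ℝ} (hr : r ≠ 0) {θ θ' : ℝ}
    (hlt : 0 < θ' - θ) (hlt2 : θ' - θ < 2 * Real.pi)
    (h : circlePoint p r θ = circlePoint p r θ') : False := by
  have hc := congrArg (cw p) h
  rw [cw_circlePoint, cw_circlePoint] at hc
  have hr' : (r : ℂ) ≠ 0 := by exact_mod_cast hr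
  have hexp : Complex.exp (θ * Complex.I) = Complex.exp (θ' * Complex.I) :=
    mul_left_cancel₀ hr' hc
  rw [Complex.exp_eq_exp_iff_exists_int] at hexp
  obtain ⟨n, hn⟩ := hexp
  have him := congrArg Complex.im hn
  simp at him
  have h2pi : (0:ℝ) < 2 * Real.pi := by positivity
  have hm : ((-n : ℤ) : ℝ) * (2 * Real.pi) = θ' - θ := by push_cast; linarith
  have h1 : 0 < ((-n : ℤ) : ℝ) := by
    rcases mul_pos_iff.mp (hm ▸ hlt) with ⟨h, _⟩ | ⟨_, h⟩
    · exact h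
    · linarith
  have h2 : ((-n : ℤ) : ℝ) < 1 := (mul_lt_iff_lt_one_left h2pi).mp (by rw [hm]; exact hlt2)
  have h1' : (0:ℤ) < -n := by exact_mod_cast h1
  have h2' : (-n:ℤ) < 1 := by exact_mod_cast h2
  omega

lemma exp_inv_aux (θ : ℝ) :
    Complex.exp ((θ:ℂ) * Complex.I) * Complex.exp ((-θ:ℝ) * Complex.I) = 1 := by
  rw [← Complex.exp_add]
  push_cast
  rw [show (θ:ℂ) * Complex.I + -θ * Complex.I = 0 by ring, Complex.exp_zero]

lemma lift_eq {p : Plane} {r : ℝ} (hr : 0 < r) (θz : ℝ) {w : Plane}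
    (hw : w ∈ Metric.sphere p r) :
    circlePoint p r (θz + Real.pi +
      Complex.arg (-(cw p w * Complex.exp ((-θz : ℝ) * Complex.I)))) = w := by
  have habsu : ‖-(cw p w * Complex.exp ((-θz : ℝ) * Complex.I))‖ = r := by
    rw [norm_neg, norm_mul, abs_cw]
    have : ‖Complex.exp ((-θz : ℝ) * Complex.I)‖ = 1 :=
      Complex.norm_exp_ofReal_mul_I _
    rw [this, mul_one]
    exact hw
  have key : (r : ℂ) * Complex.exp
      (Complex.arg (-(cw p w * Complex.exp ((-θz : ℝ) * Complex.I))) * Complex.I)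
      = -(cw p w * Complex.exp ((-θz : ℝ) * Complex.I)) := by
    rw [← habsu]
    exact Complex.norm_mul_exp_arg_mul_I _
  apply cw_inj (p := p)
  rw [cw_circlePoint]
  rw [show ((θz + Real.pi + Complex.arg (-(cw p w * Complex.exp ((-θz : ℝ) * Complex.I))) : ℝ) : ℂ)
      = (θz:ℂ) + (Real.pi:ℂ) + (Complex.arg (-(cw p w * Complex.exp ((-θz : ℝ) * Complex.I))) : ℂ)
      by push_cast; ring]
  rw [add_mul, add_mul, Complex.exp_add, Complex.exp_add, Complex.exp_pi_mul_I]
  have hinv := exp_inv_aux θz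
  linear_combination (-(Complex.exp ((θz:ℂ) * Complex.I))) * key + (cw p w) * hinv

lemma continuous_circlePoint (p : Plane) (r : ℝ) : Continuous (circlePoint p r) := by
  unfold circlePoint
  fun_prop

lemma forall_of_td {X : Set Plane} {p : Plane} {r : ℝ} (hr : 0 < r)
    (htd : IsTotallyDisconnected (Metric.sphere p r ∩ X)) :
    ∀ a b : ℚ, (a:ℝ) < b → ∃ θ ∈ Icc (a:ℝ) (b:ℝ), circlePoint p r θ ∉ X := by
  intro a b hab
  by_contra hcon
  push_neg at hcon
  set t : Set Plane := circlePoint p r '' Icc (a:ℝ) (b:ℝ) with ht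
  have hsub : t ⊆ Metric.sphere p r ∩ X := by
    rintro w ⟨θ, hθ, rfl⟩
    refine ⟨?_, hcon θ hθ⟩
    simp only [Metric.mem_sphere, dist_circlePoint]
    exact abs_of_pos hr
  have hpre : IsPreconnected t :=
    (isPreconnected_Icc).image _ ((continuous_circlePoint p r).continuousOn)
  set δ : ℝ := min ((b:ℝ) - a) 1 with hδ
  have hδ0 : 0 < δ := lt_min (by linarith) one_pos
  have h1 : circlePoint p r (a:ℝ) ∈ t := ⟨a, ⟨le_refl _, hab.le⟩, rfl⟩
  have h2 : circlePoint p r ((a:ℝ) + δ) ∈ t :=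
    ⟨(a:ℝ) + δ, ⟨by linarith, by have := min_le_left ((b:ℝ) - a) 1; linarith⟩, rfl⟩
  have := htd t hsub hpre h1 h2
  exact circlePoint_inj hr.ne' (by linarith)
    (by have := min_le_right ((b:ℝ) - a) 1; have := Real.pi_gt_three; simp only [add_sub_cancel_left]; linarith) this

lemma td_of_forall {X : Set Plane} {p : Plane} {r : ℝ} (hr : 0 < r)
    (H : ∀ a b : ℚ, (a:ℝ) < b → ∃ θ ∈ Icc (a:ℝ) (b:ℝ), circlePoint p r θ ∉ X) :
    IsTotallyDisconnected (Metric.sphere p r ∩ X) := by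
  intro t hts hpre x hx y hy
  by_contra hxy
  -- find a point of the sphere not in t
  have hz : ∃ z ∈ Metric.sphere p r, z ∉ t := by
    by_contra hcon
    push_neg at hcon
    obtain ⟨θ, hθ, hθX⟩ := H 0 1 (by norm_num)
    have : circlePoint p r θ ∈ Metric.sphere p r := by
      simp only [Metric.mem_sphere, dist_circlePoint]; exact abs_of_pos hr
    exact hθX ((hts (hcon _ this)).2)
  obtain ⟨z, hzs, hzt⟩ := hz
  obtain ⟨θz, hθz⟩ := circlePoint_surj hr hzs
  set φ : Plane → ℝ :=
    fun w => θz + Real.pi + Complex.arg (-(cw p w * Complex.exp ((-θz : ℝ) * Complex.I)))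
    with hφ
  have hback : ∀ w ∈ Metric.sphere p r, circlePoint p r (φ w) = w := fun w hw =>
    lift_eq hr θz hw
  have hcont : ContinuousOn φ t := by
    intro w hw
    have hws : w ∈ Metric.sphere p r := (hts hw).1
    apply ContinuousAt.continuousWithinAt
    have hg : ContinuousAt (fun w => -(cw p w * Complex.exp ((-θz : ℝ) * Complex.I))) w :=
      (((cw_continuous p).mul continuous_const).neg).continuousAt
    have hslit : -(cw p w * Complex.exp ((-θz : ℝ) * Complex.I)) ∈ Complex.slitPlane := by
      by_contra hns
      rw [Complex.mem_slitPlane_iff] at hns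
      push_neg at hns
      set u : ℂ := cw p w * Complex.exp ((-θz : ℝ) * Complex.I) with hu
      have him : u.im = 0 := by
        have := hns.2
        simpa using this
      have habsu : ‖u‖ = r := by
        rw [hu, norm_mul, abs_cw, Complex.norm_exp_ofReal_mul_I, mul_one]
        exact hws
      have hre : u.re ≥ 0 := by
        have := hns.1
        simpa using this
      have hueq : u = (r : ℂ) := by
        have : u = (u.re : ℂ) := Complex.ext rfl (by simpa using him)
        rw [this] at habsu ⊢
        rw [Complex.norm_real, Real.norm_eq_abs, abs_of_nonneg hre] at habsu
        rw [habsu]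
      -- then w = z
      have : cw p w = cw p z := by
        rw [← hθz, cw_circlePoint]
        have hinv := exp_inv_aux θz
        calc cw p w = cw p w * (Complex.exp ((θz:ℂ) * Complex.I) *
              Complex.exp ((-θz : ℝ) * Complex.I)) := by rw [hinv, mul_one]
          _ = u * Complex.exp ((θz:ℂ) * Complex.I) := by rw [hu]; ring
          _ = (r:ℂ) * Complex.exp ((θz:ℂ) * Complex.I) := by rw [hueq]
      exact hzt (cw_inj this ▸ hw)
    have harg : ContinuousAt
        (fun w => Complex.arg (-(cw p w * Complex.exp ((-θz : ℝ) * Complex.I)))) w :=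
      ContinuousAt.comp (g := Complex.arg)
        (f := fun w => -(cw p w * Complex.exp ((-θz : ℝ) * Complex.I)))
        (Complex.continuousAt_arg hslit) hg
    exact continuousAt_const.add harg
  have hpres : IsPreconnected (φ '' t) := hpre.image φ hcont
  have hxs : φ x ∈ φ '' t := mem_image_of_mem φ hx
  have hys : φ y ∈ φ '' t := mem_image_of_mem φ hy
  have hmem : ∀ θ ∈ φ '' t, circlePoint p r θ ∈ X := by
    rintro θ ⟨w, hw, rfl⟩
    rw [hback w (hts hw).1]
    exact (hts hw).2
  have hne : φ x ≠ φ y := by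
    intro h
    apply hxy
    rw [← hback x (hts hx).1, ← hback y (hts hy).1, h]
  -- get an interval inside φ '' t
  have key : ∀ c d : ℝ, c ∈ φ '' t → d ∈ φ '' t → c < d → False := by
    intro c d hc hd hcd
    have hicc : Icc c d ⊆ φ '' t := hpres.Icc_subset hc hd
    obtain ⟨a, hca, had⟩ := exists_rat_btwn hcd
    obtain ⟨b, hab, hbd⟩ := exists_rat_btwn had
    obtain ⟨θ, hθ, hθX⟩ := H a b (by exact_mod_cast hab)
    refine hθX (hmem θ (hicc ⟨?_, ?_⟩))
    · exact le_trans hca.le hθ.1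
    · exact le_trans hθ.2 hbd.le
  rcases lt_or_gt_of_ne hne with h | h
  · exact key _ _ hxs hys h
  · exact key _ _ hys hxs h

lemma circlePoint_neg (p : Plane) (q θ : ℝ) :
    circlePoint p (-q) θ = circlePoint p q (θ + Real.pi) := by
  apply cw_inj (p := p)
  rw [cw_circlePoint, cw_circlePoint]
  rw [show ((θ + Real.pi : ℝ) : ℂ) = (θ:ℂ) + (Real.pi:ℂ) by push_cast; ring]
  rw [add_mul, Complex.exp_add, Complex.exp_pi_mul_I]
  push_cast
  ring

lemma not_box_subset {X : Set Plane} (hXd : interior X = ∅) (p : Plane)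
    {a b c d : ℝ} (hab : a < b) (hc : 0 < c) (hcd : c < d)
    (h : ∀ r ∈ Ioo c d, ∀ θ ∈ Icc a b, circlePoint p r θ ∈ X) : False := by
  set θ₁ : ℝ := (a + b) / 2 with hθ₁
  set δ : ℝ := min ((b - a) / 2) 1 with hδdef
  have hδ0 : 0 < δ := lt_min (by linarith) one_pos
  have hδa : θ₁ - δ ≥ a := by
    have := min_le_left ((b - a) / 2) 1; simp only [hθ₁, hδdef]; linarith
  have hδb : θ₁ + δ ≤ b := by
    have := min_le_left ((b - a) / 2) 1; simp only [hθ₁, hδdef]; linarith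
  set g : Plane → ℂ := fun x => cw p x * Complex.exp ((-θ₁ : ℝ) * Complex.I) with hg
  have hgc : Continuous g := (cw_continuous p).mul continuous_const
  set S : Set ℂ := {z : ℂ | 0 < z.re} ∩ Complex.arg ⁻¹' Ioo (-δ) δ with hS
  have hSopen : IsOpen S := by
    apply ContinuousOn.isOpen_inter_preimage
    · intro z hz
      exact (Complex.continuousAt_arg (Or.inl hz)).continuousWithinAt
    · exact isOpen_lt continuous_const Complex.continuous_re
    · exact isOpen_Ioo
  set O : Set Plane := {x | dist x p ∈ Ioo c d} ∩ g ⁻¹' S with hO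
  have hOopen : IsOpen O :=
    (isOpen_Ioo.preimage (continuous_id.dist continuous_const)).inter (hSopen.preimage hgc)
  have hOne : O.Nonempty := by
    refine ⟨circlePoint p ((c + d) / 2) θ₁, ⟨?_, ?_, ?_⟩⟩
    · rw [mem_setOf_eq, dist_circlePoint, abs_of_pos (by linarith)]
      constructor <;> [linarith; linarith]
    · show 0 < (g _).re
      rw [hg]
      simp only
      rw [cw_circlePoint, mul_assoc, exp_inv_aux θ₁, mul_one]
      simp only [Complex.ofReal_re]
      linarith
    · show Complex.arg (g _) ∈ Ioo (-δ) δ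
      rw [hg]
      simp only
      rw [cw_circlePoint, mul_assoc, exp_inv_aux θ₁, mul_one]
      rw [Complex.arg_ofReal_of_nonneg (by linarith)]
      exact ⟨by linarith, hδ0⟩
  have hOX : O ⊆ X := by
    rintro x ⟨hxd, hre, harg⟩
    have hρ : dist x p ∈ Ioo c d := hxd
    have hρ0 : 0 < dist x p := lt_trans hc hρ.1
    have habsg : ‖g x‖ = dist x p := by
      rw [hg]; simp only; rw [norm_mul, abs_cw, Complex.norm_exp_ofReal_mul_I, mul_one]
    have key : ((dist x p : ℝ) : ℂ) * Complex.exp (Complex.arg (g x) * Complex.I) = g x := by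
      rw [← habsg]; exact Complex.norm_mul_exp_arg_mul_I _
    have hx : x = circlePoint p (dist x p) (θ₁ + Complex.arg (g x)) := by
      apply cw_inj (p := p)
      symm
      rw [cw_circlePoint]
      rw [show ((θ₁ + Complex.arg (g x) : ℝ) : ℂ) = (θ₁:ℂ) + (Complex.arg (g x) : ℂ)
        by push_cast; ring]
      rw [add_mul, Complex.exp_add]
      have hinv := exp_inv_aux θ₁
      have hgx : g x = cw p x * Complex.exp ((-θ₁ : ℝ) * Complex.I) := rfl
      calc (dist x p : ℂ) * (Complex.exp ((θ₁:ℂ) * Complex.I) *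
              Complex.exp ((Complex.arg (g x) : ℂ) * Complex.I))
          = Complex.exp ((θ₁:ℂ) * Complex.I) *
              ((dist x p : ℂ) * Complex.exp ((Complex.arg (g x) : ℂ) * Complex.I)) := by ring
        _ = Complex.exp ((θ₁:ℂ) * Complex.I) * g x := by rw [key]
        _ = cw p x * (Complex.exp ((θ₁:ℂ) * Complex.I) *
              Complex.exp ((-θ₁ : ℝ) * Complex.I)) := by rw [hgx]; ring
        _ = cw p x := by rw [hinv, mul_one]
    have hθmem : θ₁ + Complex.arg (g x) ∈ Icc a b := by
      have h1 : -δ < Complex.arg (g x) := harg.1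
      have h2 : Complex.arg (g x) < δ := harg.2
      exact ⟨by linarith, by linarith⟩
    rw [hx]
    exact h _ hρ _ hθmem
  have : O ⊆ interior X := interior_maximal hOX hOopen
  rw [hXd] at this
  exact hOne.ne_empty (subset_empty_iff.mp this)

lemma dense_V {X : Set Plane} (hXc : IsCompact X) (hXd : interior X = ∅) (p : Plane)
    (a b : ℚ) :
    Dense {r : ℝ | (a:ℝ) < b → ∃ θ ∈ Icc (a:ℝ) (b:ℝ), circlePoint p r θ ∉ X} := by
  by_cases hab : (a:ℝ) < b
  · rw [show {r : ℝ | (a:ℝ) < b → ∃ θ ∈ Icc (a:ℝ) (b:ℝ), circlePoint p r θ ∉ X}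
        = {r : ℝ | ∀ θ ∈ Icc (a:ℝ) (b:ℝ), circlePoint p r θ ∈ X}ᶜ by
      ext r; simp only [mem_setOf_eq, mem_compl_iff, not_forall]
      constructor
      · rintro hr; obtain ⟨θ, hθ, hθX⟩ := hr hab; exact ⟨θ, hθ, hθX⟩
      · rintro ⟨θ, hθ, hθX⟩ _; exact ⟨θ, hθ, hθX⟩]
    rw [← interior_eq_empty_iff_dense_compl]
    by_contra hne
    obtain ⟨r₁, hr₁⟩ := nonempty_iff_ne_empty.mpr hne
    obtain ⟨ε, hε, hball⟩ := Metric.isOpen_iff.mp isOpen_interior r₁ hr₁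
    rw [Real.ball_eq_Ioo] at hball
    have hsub : Ioo (r₁ - ε) (r₁ + ε) ⊆ {r : ℝ | ∀ θ ∈ Icc (a:ℝ) (b:ℝ), circlePoint p r θ ∈ X} :=
      hball.trans interior_subset
    rcases le_or_gt 0 r₁ with h0 | h0
    · exact not_box_subset hXd p hab (show (0:ℝ) < r₁ + ε/4 by linarith)
        (show (r₁ + ε/4 : ℝ) < r₁ + ε/2 by linarith)
        (fun r hr θ hθ => hsub ⟨by linarith [hr.1], by linarith [hr.2]⟩ θ hθ)
    · refine not_box_subset hXd p (show (a:ℝ) - Real.pi < (b:ℝ) - Real.pi by linarith)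
        (show (0:ℝ) < -r₁ by linarith) (show (-r₁ : ℝ) < -r₁ + ε by linarith) ?_
      intro s hs θ hθ
      have hmem : -s ∈ Ioo (r₁ - ε) (r₁ + ε) := ⟨by linarith [hs.2], by linarith [hs.1]⟩
      have := hsub hmem (θ + Real.pi) ⟨by linarith [hθ.1], by linarith [hθ.2]⟩
      rwa [show circlePoint p s θ = circlePoint p (-s) (θ + Real.pi) by
        rw [← circlePoint_neg p (-s) θ, neg_neg]]
  · convert dense_univ
    ext r
    simp [hab]

theorem dense_Gdelta_radii_totally_disconnected (X : Set Plane)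
    (hXc : IsCompact X) (hXd : interior X = ∅) (p : Plane) (hp : p ∈ X) :
    IsGδ {r : ℝ | 0 < r ∧ IsTotallyDisconnected (Metric.sphere p r ∩ X)} ∧
      Set.Ioi (0 : ℝ) ⊆
        closure {r : ℝ | 0 < r ∧ IsTotallyDisconnected (Metric.sphere p r ∩ X)} := by
  set V : ℚ → ℚ → Set ℝ :=
    fun a b => {r : ℝ | (a:ℝ) < b → ∃ θ ∈ Icc (a:ℝ) (b:ℝ), circlePoint p r θ ∉ X} with hV
  have hVopen : ∀ a b : ℚ, IsOpen (V a b) := by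
    intro a b
    by_cases hab : (a:ℝ) < b
    · have : V a b = {r : ℝ | ∀ θ ∈ Icc (a:ℝ) (b:ℝ), circlePoint p r θ ∈ X}ᶜ := by
        ext r
        simp only [hV, mem_setOf_eq, mem_compl_iff, not_forall]
        constructor
        · rintro hr; obtain ⟨θ, hθ, hθX⟩ := hr hab; exact ⟨θ, hθ, hθX⟩
        · rintro ⟨θ, hθ, hθX⟩ _; exact ⟨θ, hθ, hθX⟩
      rw [this, isOpen_compl_iff]
      have : {r : ℝ | ∀ θ ∈ Icc (a:ℝ) (b:ℝ), circlePoint p r θ ∈ X}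
          = ⋂ θ ∈ Icc (a:ℝ) (b:ℝ), {r : ℝ | circlePoint p r θ ∈ X} := by
        ext r; simp [mem_iInter]
      rw [this]
      apply isClosed_biInter
      intro θ hθ
      have : Continuous fun r : ℝ => circlePoint p r θ := by
        unfold circlePoint; fun_prop
      exact hXc.isClosed.preimage this
    · have : V a b = univ := by
        ext r
        simp only [hV, mem_setOf_eq, mem_univ, iff_true]
        intro h
        exact absurd h hab
      rw [this]; exact isOpen_univ
  have hZeq : {r : ℝ | 0 < r ∧ IsTotallyDisconnected (Metric.sphere p r ∩ X)}
      = Ioi (0:ℝ) ∩ ⋂ (a : ℚ), ⋂ (b : ℚ), V a b := by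
    ext r
    simp only [mem_setOf_eq, mem_inter_iff, mem_Ioi, mem_iInter, hV]
    constructor
    · rintro ⟨hr, htd⟩
      exact ⟨hr, fun a b hab => forall_of_td hr htd a b hab⟩
    · rintro ⟨hr, hall⟩
      exact ⟨hr, td_of_forall hr fun a b hab => hall a b hab⟩
  rw [hZeq]
  constructor
  · exact (isOpen_Ioi.isGδ).inter
      (IsGδ.iInter fun a => IsGδ.iInter fun b => (hVopen a b).isGδ)
  · have hdense : Dense (⋂ (a : ℚ), ⋂ (b : ℚ), V a b) := by
      apply dense_iInter_of_Gδ
      · intro a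
        exact IsGδ.iInter fun b => (hVopen a b).isGδ
      · intro a
        apply dense_iInter_of_isOpen (fun b => hVopen a b)
        intro b
        exact dense_V hXc hXd p a b
    exact hdense.open_subset_closure_inter isOpen_Ioi
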